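/- If 𝒫 is a nonempty admissible, linearly repetitive set of abstract patterns in ℝ^d, then for every r ≥ 0 the set of pattern classes P ∈ 𝒫 with r_out(P) ≤ r is finite. -/

import Mathlib

open Metric Set Filter MeasureTheory Topology

noncomputable section

/-- Points of `ℝ^d`. -/
abbrev Pt (d : ℕ) := EuclideanSpace ℝ (Fin d)

variable (d : ℕ)

/-- A tile: a subset of `ℝ^d` homeomorphic to the closed unit ball. -/
def IsTile (m : Set (Pt d)) : Prop :=
  Nonempty (m ≃ₜ (Metric.closedBall (0 : Pt d) 1))

/-- A pattern: a finite nonempty collection of tiles whose interiors are pairwise disjoint. -/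
def IsPattern (M : Set (Set (Pt d))) : Prop :=
  M.Finite ∧ M.Nonempty ∧ (∀ m ∈ M, IsTile d m) ∧
    M.Pairwise fun m m' => interior m ∩ interior m' = ∅

/-- A tiling of `ℝ^d`: a collection of tiles with pairwise disjoint interiors covering `ℝ^d`. -/
def IsTiling (T : Set (Set (Pt d))) : Prop :=
  (∀ m ∈ T, IsTile d m) ∧
    (T.Pairwise fun m m' => interior m ∩ interior m' = ∅) ∧ ⋃₀ T = Set.univ

/-- Translation of a pattern by `t`. -/
def patTrans (t : Pt d) (M : Set (Set (Pt d))) : Set (Set (Pt d)) :=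
  (fun m => (fun x => x + t) '' m) '' M

/-- Support (underlying set) of a pattern. -/
def supp (M : Set (Set (Pt d))) : Set (Pt d) := ⋃₀ M

/-- Inner radius: the largest `r` such that some closed ball of radius `r` fits inside `s(M)`. -/
def rIn (M : Set (Set (Pt d))) : ℝ :=
  sSup {r : ℝ | ∃ x : Pt d, Metric.closedBall x r ⊆ supp d M}

/-- Outer radius: the smallest `r` such that some closed ball of radius `r` contains `s(M)`. -/
def rOut (M : Set (Set (Pt d))) : ℝ :=
  sInf {r : ℝ | ∃ x : Pt d, supp d M ⊆ Metric.closedBall x r}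

/-- The pattern class of `P` is a subpattern of (the class of) `Q`:
some translate of `P` is contained in `Q`. -/
def SubpatternClass (P Q : Set (Set (Pt d))) : Prop :=
  ∃ t : Pt d, patTrans d t P ⊆ Q

/-- A set of abstract patterns is modelled as a translation-closed set `Ps` of concrete
patterns (the union of the pattern classes).  `Admissible` encodes conditions
(i)–(iii) of Definition 2.1. -/
structure Admissible (Ps : Set (Set (Set (Pt d)))) : Prop where
  pattern : ∀ P ∈ Ps, IsPattern d P
  transClosed : ∀ (t : Pt d), ∀ P ∈ Ps, patTrans d t P ∈ Ps
  subClosed : ∀ P ∈ Ps, ∀ Q : Set (Set (Pt d)), IsPattern d Q → Q ⊆ P → Q ∈ Ps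
  tileBounds : ∃ rmin rmax : ℝ, 0 < rmin ∧ rmin ≤ rmax ∧
    ∀ m : Set (Pt d), ({m} : Set (Set (Pt d))) ∈ Ps →
      rmin ≤ rIn d {m} ∧ rIn d {m} ≤ rOut d {m} ∧ rOut d {m} ≤ rmax
  extend : ∀ P ∈ Ps, (0 : Pt d) ∈ supp d P → ∀ r : ℝ, 0 < r →
    ∃ Q ∈ Ps, P ⊆ Q ∧ Metric.closedBall (0 : Pt d) r ⊆ supp d Q

/-- Linear repetitivity of a (translation-closed) set of patterns. -/
def LinearlyRepetitive (Ps : Set (Set (Set (Pt d)))) : Prop :=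
  ∃ c : ℝ, 0 < c ∧ ∀ P ∈ Ps, 1 ≤ rOut d P →
    ∀ Q ∈ Ps, c * rOut d P ≤ rIn d Q → SubpatternClass d P Q

/-- The box determined by corner functions `a b : Fin d → ℝ`. -/
def boxSet (a b : Fin d → ℝ) : Set (Pt d) := {x | ∀ j, x j ∈ Set.Icc (a j) (b j)}

/-- `B` is a box. -/
def IsBox (B : Set (Pt d)) : Prop :=
  ∃ a b : Fin d → ℝ, (∀ j, a j < b j) ∧ B = boxSet d a b

/-- `B` is an `r`-box: all side lengths lie in `[r, 2r]`. -/
def IsRBox (r : ℝ) (B : Set (Pt d)) : Prop :=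
  ∃ a b : Fin d → ℝ, (∀ j, a j < b j) ∧ B = boxSet d a b ∧
    ∀ j, r ≤ b j - a j ∧ b j - a j ≤ 2 * r

/-- Width of a box: the minimum of its side lengths. -/
def widthOf (B : Set (Pt d)) : ℝ :=
  ⨅ j : Fin d, (sSup ((fun x : Pt d => x j) '' B) - sInf ((fun x : Pt d => x j) '' B))

/-- Volume of a subset of `ℝ^d`. -/
def volOf (B : Set (Pt d)) : ℝ := (volume B).toReal

/-- Restriction `M ∩ B` of a pattern or tiling `M` to `B`. -/
def patRestrict (M : Set (Set (Pt d))) (B : Set (Pt d)) : Set (Set (Pt d)) :=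
  {s | ∃ m ∈ M, (m ∩ interior B).Nonempty ∧ s = m ∩ B}

/-- The set `Ps_B` of box-patterns derived from `Ps` (concrete representatives). -/
def BoxPatterns (Ps : Set (Set (Set (Pt d)))) : Set (Set (Set (Pt d))) :=
  {Q | ∃ P ∈ Ps, ∃ B : Set (Pt d), IsBox d B ∧ B ⊆ supp d P ∧ Q = patRestrict d P B}

/-- The set `Ps(r)` of `r`-patterns derived from `Ps`. -/
def RPatterns (Ps : Set (Set (Set (Pt d)))) (r : ℝ) : Set (Set (Set (Pt d))) :=
  {Q | ∃ P ∈ Ps, ∃ B : Set (Pt d), IsRBox d r B ∧ B ⊆ supp d P ∧ Q = patRestrict d P B}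

/-- Width of a box-pattern. -/
def patWidth (M : Set (Set (Pt d))) : ℝ := widthOf d (supp d M)

/-- Volume of a box-pattern. -/
def patVol (M : Set (Set (Pt d))) : ℝ := volOf d (supp d M)

/-- A subadditive function on `Ps_B`, with constants `dF, rF` and error function `cF`.
`F` is defined on concrete patterns and is translation-invariant (i.e. well defined on
pattern classes). -/
structure SubadditiveOn (Ps : Set (Set (Set (Pt d)))) (F : Set (Set (Pt d)) → ℝ)
    (dF rF : ℝ) (cF : ℝ → ℝ) : Prop where
  invariant : ∀ (t : Pt d), ∀ M ∈ BoxPatterns d Ps, F (patTrans d t M) = F M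
  dF_nonneg : 0 ≤ dF
  rF_nonneg : 0 ≤ rF
  cF_anti : ∀ r s : ℝ, rF ≤ r → r ≤ s → cF s ≤ cF r
  cF_lim : Tendsto cF atTop (nhds 0)
  subadd : ∀ M ∈ BoxPatterns d Ps, ∀ (n : ℕ) (Bj : Fin n → Set (Pt d)),
    (∀ j, IsBox d (Bj j)) →
    (∀ i j, i ≠ j → interior (Bj i) ∩ interior (Bj j) = ∅) →
    (⋃ j, Bj j) = supp d M →
    (∀ j, rF ≤ widthOf d (Bj j)) →
    F M ≤ (∑ j, F (patRestrict d M (Bj j))) +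
      ∑ j, cF (widthOf d (Bj j)) * volOf d (Bj j)
  bound : ∀ M ∈ BoxPatterns d Ps, |F M| ≤ dF * patVol d M

/-- The upper mean `F⁺(r)`. -/
def Fplus (Ps : Set (Set (Set (Pt d)))) (F : Set (Set (Pt d)) → ℝ) (r : ℝ) : ℝ :=
  sSup ((fun P => F P / patVol d P) '' RPatterns d Ps r)

/-- The lower mean `F⁻(r)`. -/
def Fminus (Ps : Set (Set (Set (Pt d)))) (F : Set (Set (Pt d)) → ℝ) (r : ℝ) : ℝ :=
  sInf ((fun P => F P / patVol d P) '' RPatterns d Ps r)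



lemma patTrans_zero (M : Set (Set (Pt d))) : patTrans d 0 M = M := by
  simp [patTrans]

lemma patTrans_patTrans (s t : Pt d) (M : Set (Set (Pt d))) :
    patTrans d t (patTrans d s M) = patTrans d (s + t) M := by
  simp only [patTrans, Set.image_image, add_assoc]

lemma supp_patTrans (t : Pt d) (M : Set (Set (Pt d))) :
    supp d (patTrans d t M) = (fun x => x + t) '' supp d M := by
  simp only [supp, patTrans, Set.image_sUnion]

lemma mem_supp {M : Set (Set (Pt d))} {z : Pt d} : z ∈ supp d M ↔ ∃ m ∈ M, z ∈ m :=
  Set.mem_sUnion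

lemma tile_nonempty {m : Set (Pt d)} (h : IsTile d m) : m.Nonempty := by
  obtain ⟨e⟩ := h
  exact ⟨e.symm ⟨0, by simp⟩, (e.symm ⟨0, by simp⟩).2⟩

lemma tile_isCompact {m : Set (Pt d)} (h : IsTile d m) : IsCompact m := by
  obtain ⟨e⟩ := h
  have h1 : CompactSpace (Metric.closedBall (0 : Pt d) 1) :=
    isCompact_iff_compactSpace.mp (isCompact_closedBall 0 1)
  have h2 : CompactSpace m := e.symm.compactSpace
  exact isCompact_iff_compactSpace.mpr h2

lemma isPattern_subset {P Q : Set (Set (Pt d))} (hP : IsPattern d P) (hQP : Q ⊆ P)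
    (hQ : Q.Nonempty) : IsPattern d Q :=
  ⟨hP.1.subset hQP, hQ, fun m hm => hP.2.2.1 m (hQP hm), hP.2.2.2.mono hQP⟩

lemma ball_subset_radius_le (hd : 0 < d) {x y : Pt d} {R R' : ℝ} (hR : 0 ≤ R)
    (h : Metric.closedBall x R ⊆ Metric.closedBall y R') : R ≤ R' := by
  set u : Pt d := EuclideanSpace.single ⟨0, hd⟩ R with hu_def
  have hu : ‖u‖ = R := by
    rw [hu_def, EuclideanSpace.norm_single]; exact abs_of_nonneg hR
  have h1 : x + u ∈ Metric.closedBall x R := by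
    rw [mem_closedBall, dist_eq_norm]; simp [hu]
  have h2 : x - u ∈ Metric.closedBall x R := by
    rw [mem_closedBall, dist_eq_norm]; simp [hu]
  have h1' := h h1
  have h2' := h h2
  rw [mem_closedBall] at h1' h2'
  have hdist : dist (x + u) (x - u) = 2 * R := by
    rw [dist_eq_norm]
    have he : (x + u) - (x - u) = (2 : ℝ) • u := by
      rw [two_smul]; abel
    rw [he, norm_smul, hu]; simp
  have htri := dist_triangle (x + u) y (x - u)
  rw [dist_comm y (x - u)] at htri
  linarith [htri, hdist, h1', h2']

lemma rOut_le' {M : Set (Set (Pt d))} {R : ℝ} (hne : (supp d M).Nonempty)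
    (x : Pt d) (h : supp d M ⊆ Metric.closedBall x R) : rOut d M ≤ R := by
  have hmem : R ∈ {r : ℝ | ∃ x : Pt d, supp d M ⊆ Metric.closedBall x r} := ⟨x, h⟩
  apply csInf_le _ hmem
  refine ⟨0, fun r' hr' => ?_⟩
  obtain ⟨y, hy⟩ := hr'
  by_contra hneg
  push_neg at hneg
  obtain ⟨z, hz⟩ := hne
  have h1 := hy hz
  rw [mem_closedBall] at h1
  have h2 := dist_nonneg (x := z) (y := y)
  linarith

lemma le_rOut' (hd : 0 < d) {M : Set (Set (Pt d))} {R : ℝ} (hR : 0 ≤ R) {x : Pt d}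
    (hball : Metric.closedBall x R ⊆ supp d M) {x' : Pt d} {R' : ℝ}
    (hbd : supp d M ⊆ Metric.closedBall x' R') : R ≤ rOut d M := by
  have hmem : R' ∈ {r : ℝ | ∃ x : Pt d, supp d M ⊆ Metric.closedBall x r} := ⟨x', hbd⟩
  apply le_csInf ⟨R', hmem⟩
  rintro b ⟨y, hy⟩
  exact ball_subset_radius_le d hd hR (hball.trans hy)

lemma le_rIn' (hd : 0 < d) {M : Set (Set (Pt d))} {R : ℝ} {x : Pt d}
    (hball : Metric.closedBall x R ⊆ supp d M) {x' : Pt d} {R' : ℝ}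
    (hbd : supp d M ⊆ Metric.closedBall x' R') : R ≤ rIn d M := by
  have hmem : R ∈ {r : ℝ | ∃ x : Pt d, Metric.closedBall x r ⊆ supp d M} := ⟨x, hball⟩
  apply le_csSup _ hmem
  refine ⟨max 0 R', ?_⟩
  rintro s ⟨y, hy⟩
  rcases le_or_gt s 0 with h | h
  · exact le_max_of_le_left h
  · exact le_max_of_le_right (ball_subset_radius_le d hd h.le (hy.trans hbd))

lemma exists_ball_of_rOut_le {M : Set (Set (Pt d))}
    (hb : Bornology.IsBounded (supp d M)) {r : ℝ}
    (h : rOut d M ≤ r) : ∃ x, supp d M ⊆ Metric.closedBall x (r + 1) := by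
  obtain ⟨R, hR⟩ := (Metric.isBounded_iff_subset_closedBall (0 : Pt d)).mp hb
  have hne : {r' : ℝ | ∃ x : Pt d, supp d M ⊆ Metric.closedBall x r'}.Nonempty := ⟨R, 0, hR⟩
  obtain ⟨s, ⟨y, hy⟩, hs⟩ := exists_lt_of_csInf_lt hne (lt_of_le_of_lt h (by linarith : r < r + 1))
  exact ⟨y, hy.trans (Metric.closedBall_subset_closedBall hs.le)⟩

/-- finiteness observation in Appendix A. In a nonempty admissible
linearly repetitive set of abstract patterns, for every `r ≥ 0` there are only finitely
many pattern classes with outer radius at most `r`: there is a finite set of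
representatives such that every such pattern is a translate of one of them. -/
theorem finitely_many_pattern_classes (d : ℕ) (Ps : Set (Set (Set (Pt d))))
    (hne : Ps.Nonempty) (hadm : Admissible d Ps) (hlr : LinearlyRepetitive d Ps) :
    ∀ r : ℝ, 0 ≤ r → ∃ Q : Set (Set (Set (Pt d))), Q.Finite ∧
      ∀ P ∈ Ps, rOut d P ≤ r → ∃ P₀ ∈ Q, ∃ t : Pt d, P = patTrans d t P₀ := by
  intro r hr
  rcases Nat.eq_zero_or_pos d with hd | hd
  · subst hd
    refine ⟨{{(Set.univ : Set (Pt 0))}}, Set.finite_singleton _, fun P hP _ => ?_⟩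
    refine ⟨{Set.univ}, Set.mem_singleton _, 0, ?_⟩
    rw [patTrans_zero]
    have hpat := hadm.pattern P hP
    have hss : Subsingleton (Pt 0) := ⟨fun a b => by ext i; exact i.elim0⟩
    have huniv : ∀ m ∈ P, m = (Set.univ : Set (Pt 0)) := fun m hm =>
      (tile_nonempty 0 (hpat.2.2.1 m hm)).eq_univ
    obtain ⟨m₀, hm₀⟩ := hpat.2.1
    apply Set.eq_of_subset_of_subset
    · intro m hm; rw [Set.mem_singleton_iff]; exact huniv m hm
    · intro m hm; rw [Set.mem_singleton_iff] at hm; rw [hm, ← huniv m₀ hm₀]; exact hm₀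
  · obtain ⟨rmin, rmax, hrmin, hminmax, htile⟩ := hadm.tileBounds
    obtain ⟨c, hc, hLR⟩ := hlr
    have hsupp_bd : ∀ P ∈ Ps, Bornology.IsBounded (supp d P) := by
      intro P hP
      have hpat := hadm.pattern P hP
      rw [supp, Set.sUnion_eq_biUnion]
      exact (hpat.1.isCompact_biUnion fun m hm => tile_isCompact d (hpat.2.2.1 m hm)).isBounded
    have hsupp_ne : ∀ P ∈ Ps, (supp d P).Nonempty := by
      intro P hP
      have hpat := hadm.pattern P hP
      obtain ⟨m, hm⟩ := hpat.2.1
      obtain ⟨z, hz⟩ := tile_nonempty d (hpat.2.2.1 m hm)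
      exact ⟨z, Set.subset_sUnion_of_mem hm hz⟩
    set R : ℝ := 2 * r + 3 with hR_def
    set R' : ℝ := R + (2 * rmax + 2) with hR'_def
    have hR1 : (1:ℝ) ≤ R := by rw [hR_def]; linarith
    have hrmax : 0 < rmax := lt_of_lt_of_le hrmin hminmax
    have hR'pos : 0 < R' := by rw [hR'_def, hR_def]; linarith
    obtain ⟨P₁, hP₁⟩ := hne
    obtain ⟨p₁, hp₁⟩ := hsupp_ne P₁ hP₁
    have hP₁' : patTrans d (-p₁) P₁ ∈ Ps := hadm.transClosed _ _ hP₁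
    have h0₁ : (0 : Pt d) ∈ supp d (patTrans d (-p₁) P₁) := by
      rw [supp_patTrans]; exact ⟨p₁, hp₁, by simp⟩
    obtain ⟨Q₀, hQ₀, -, hQ₀ball⟩ :=
      hadm.extend _ hP₁' h0₁ (max 1 (c * R')) (lt_of_lt_of_le one_pos (le_max_left _ _))
    obtain ⟨RQ, hRQ⟩ := (Metric.isBounded_iff_subset_closedBall (0 : Pt d)).mp (hsupp_bd Q₀ hQ₀)
    have hrInQ₀ : max 1 (c * R') ≤ rIn d Q₀ := le_rIn' d hd hQ₀ball hRQ
    refine ⟨{S | S ⊆ Q₀}, (hadm.pattern Q₀ hQ₀).1.finite_subsets, ?_⟩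
    intro P hP hrout
    obtain ⟨p, hp⟩ := hsupp_ne P hP
    obtain ⟨x, hx⟩ := exists_ball_of_rOut_le d (hsupp_bd P hP) hrout
    set P' := patTrans d (-p) P with hP'_def
    have hP'mem : P' ∈ Ps := hadm.transClosed _ _ hP
    have h0' : (0 : Pt d) ∈ supp d P' := by
      rw [hP'_def, supp_patTrans]; exact ⟨p, hp, by simp⟩
    have hsuppP' : supp d P' ⊆ Metric.closedBall 0 R := by
      rw [hP'_def, supp_patTrans]
      rintro z ⟨w, hw, rfl⟩
      have h1 : dist w x ≤ r + 1 := hx hw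
      have h2 : dist p x ≤ r + 1 := hx hp
      rw [mem_closedBall]
      calc dist (w + -p) 0 = dist w p := by
            rw [dist_eq_norm, dist_eq_norm]; congr 1; abel
        _ ≤ dist w x + dist x p := dist_triangle _ _ _
        _ ≤ (r+1) + (r+1) := by rw [dist_comm x p]; linarith
        _ ≤ R := by rw [hR_def]; linarith
    obtain ⟨Q₁, hQ₁, hP'Q₁, hQ₁ball⟩ := hadm.extend _ hP'mem h0' R (by linarith)
    set Q' : Set (Set (Pt d)) := {m | m ∈ Q₁ ∧ (m ∩ Metric.closedBall 0 R).Nonempty} with hQ'_def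
    have hQ'sub : Q' ⊆ Q₁ := fun m hm => hm.1
    have hQ₁pat := hadm.pattern Q₁ hQ₁
    have h0R : (0 : Pt d) ∈ Metric.closedBall (0 : Pt d) R :=
      Metric.mem_closedBall_self (by linarith : (0:ℝ) ≤ R)
    have hballQ' : Metric.closedBall (0 : Pt d) R ⊆ supp d Q' := by
      intro z hz
      obtain ⟨m, hm, hzm⟩ := (mem_supp d).mp (hQ₁ball hz)
      have hmQ' : m ∈ Q' := ⟨hm, z, hzm, hz⟩
      exact Set.subset_sUnion_of_mem hmQ' hzm
    have hQ'ne : Q'.Nonempty := by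
      obtain ⟨m, hm, hzm⟩ := (mem_supp d).mp (hQ₁ball h0R)
      exact ⟨m, hm, 0, hzm, h0R⟩
    have hQ'pat : IsPattern d Q' := isPattern_subset d hQ₁pat hQ'sub hQ'ne
    have hQ'mem : Q' ∈ Ps := hadm.subClosed Q₁ hQ₁ Q' hQ'pat hQ'sub
    have hP'Q' : P' ⊆ Q' := by
      intro m hm
      refine ⟨hP'Q₁ hm, ?_⟩
      obtain ⟨z, hz⟩ := tile_nonempty d ((hadm.pattern P' hP'mem).2.2.1 m hm)
      exact ⟨z, hz, hsuppP' (Set.subset_sUnion_of_mem hm hz)⟩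
    have hsuppQ' : supp d Q' ⊆ Metric.closedBall 0 R' := by
      intro w hw
      obtain ⟨m, hm, hwm⟩ := (mem_supp d).mp hw
      obtain ⟨hmQ₁, z, hzm, hzball⟩ := hm
      have hmpat : IsPattern d ({m} : Set (Set (Pt d))) :=
        isPattern_subset d hQ₁pat (Set.singleton_subset_iff.mpr hmQ₁) ⟨m, rfl⟩
      have hmPs : ({m} : Set (Set (Pt d))) ∈ Ps :=
        hadm.subClosed Q₁ hQ₁ _ hmpat (Set.singleton_subset_iff.mpr hmQ₁)
      obtain ⟨y, hy⟩ := exists_ball_of_rOut_le d (hsupp_bd _ hmPs) (htile m hmPs).2.2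
      rw [supp, Set.sUnion_singleton] at hy
      have h1 : dist w y ≤ rmax + 1 := hy hwm
      have h2 : dist z y ≤ rmax + 1 := hy hzm
      have h3 : dist z 0 ≤ R := mem_closedBall.mp hzball
      rw [mem_closedBall]
      calc dist w 0 ≤ dist w y + dist y z + dist z 0 := dist_triangle4 _ _ _ _
        _ ≤ (rmax+1) + (rmax+1) + R := by rw [dist_comm y z]; linarith
        _ = R' := by rw [hR'_def]; ring
    have hsuppQ'ne : (supp d Q').Nonempty := ⟨0, hballQ' h0R⟩
    have hrOutQ'le : rOut d Q' ≤ R' := rOut_le' d hsuppQ'ne 0 hsuppQ'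
    have hrOutQ'ge : (1:ℝ) ≤ rOut d Q' :=
      hR1.trans (le_rOut' d hd (by linarith : (0:ℝ) ≤ R) hballQ' hsuppQ')
    have hkey : c * rOut d Q' ≤ rIn d Q₀ :=
      le_trans (mul_le_mul_of_nonneg_left hrOutQ'le hc.le)
        (le_trans (le_max_right 1 (c * R')) hrInQ₀)
    obtain ⟨t, ht⟩ := hLR Q' hQ'mem hrOutQ'ge Q₀ hQ₀ hkey
    have hmono : patTrans d t P' ⊆ patTrans d t Q' := Set.image_mono hP'Q'
    refine ⟨patTrans d t P', hmono.trans ht, -(-p + t), ?_⟩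
    rw [hP'_def, patTrans_patTrans, patTrans_patTrans]
    have hz : -p + (t + -(-p + t)) = (0 : Pt d) := by abel
    rw [hz, patTrans_zero]


end
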